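/- The number of projective spaces in any family of mutually orthogoval PG(d, F_q) (all on the same point set of size (q^(d+1)-1)/(q-1)) is at most (q^(d+1) - 2q + 1)/(q - 1)^2. -/

import Mathlib

/-- A line of the standard projective space `PG(d, K)`: the set of points lying in
(the projectivization of) a 2-dimensional linear subspace. -/
def IsProjLine (K V : Type*) [Field K] [AddCommGroup V] [Module K V]
    (l : Set (Projectivization K V)) : Prop :=
  ∃ W : Submodule K V, Module.finrank K W = 2 ∧ l = {P | P.submodule ≤ W}

open Projectivization in
/-- Through two distinct points there is a projective line with at least `|K| + 1` points. -/
lemma exists_good_line (K : Type*) [Field K] [Fintype K] (V : Type*) [AddCommGroup V]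
    [Module K V] [Finite V] (a b : Projectivization K V) (hab : a ≠ b) :
    ∃ l : Set (Projectivization K V), IsProjLine K V l ∧ a ∈ l ∧ b ∈ l ∧
      Fintype.card K + 1 ≤ l.ncard := by
  classical
  haveI : Finite (Projectivization K V) := Quotient.finite _
  set u := a.rep with hu'
  set v := b.rep with hv'
  have hu : u ≠ 0 := a.rep_nonzero
  have hv : v ≠ 0 := b.rep_nonzero
  have hind : ∀ s t : K, s • u + t • v = 0 → s = 0 ∧ t = 0 := by
    intro s t hst
    by_cases hs : s = 0
    · refine ⟨hs, ?_⟩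
      rw [hs, zero_smul, zero_add, smul_eq_zero] at hst
      exact hst.resolve_right hv
    · exfalso
      apply hab
      have hev : u = (-t / s) • v := by
        have h1 : s • u = (-t) • v := by linear_combination (norm := module) hst
        calc u = s⁻¹ • (s • u) := by rw [smul_smul, inv_mul_cancel₀ hs, one_smul]
          _ = (-t / s) • v := by rw [h1, smul_smul, div_eq_inv_mul]
      have hts : (-t / s) ≠ 0 := by
        intro h; rw [h, zero_smul] at hev; exact hu hev
      have h2 : Projectivization.mk K ((-t / s) • v) (hev ▸ hu) = b := by
        conv_rhs => rw [← b.mk_rep]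
        rw [Projectivization.mk_eq_mk_iff]
        exact ⟨Units.mk0 _ hts, rfl⟩
      rw [← h2]
      conv_lhs => rw [← a.mk_rep]
      rw [Projectivization.mk_eq_mk_iff]
      exact ⟨1, by simpa using hev.symm⟩
  have hli : LinearIndependent K ![u, v] := by
    rw [LinearIndependent.pair_iff]
    exact hind
  set W : Submodule K V := a.submodule ⊔ b.submodule with hW'
  have hWspan : W = Submodule.span K {u, v} := by
    rw [hW', a.submodule_eq, b.submodule_eq, ← Submodule.span_union, Set.singleton_union]
  have hW2 : Module.finrank K W = 2 := by
    rw [hWspan]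
    have : ({u, v} : Set V) = Set.range ![u, v] := by
      simp only [Matrix.range_cons, Matrix.range_empty, Set.union_empty, Set.union_singleton]
      exact Set.pair_comm u v
    rw [this, finrank_span_eq_card hli]
    simp
  refine ⟨{P | P.submodule ≤ W}, ⟨W, hW2, rfl⟩, show a.submodule ≤ W from le_sup_left,
    show b.submodule ≤ W from le_sup_right, ?_⟩
  -- the injection `Option K → line`
  have hne : ∀ c : K, u + c • v ≠ 0 := by
    intro c h
    have := (hind 1 c (by simpa using h)).1
    simp at this
  set f : Option K → Projectivization K V := fun o =>
    Option.rec b (fun c => Projectivization.mk K (u + c • v) (hne c)) o with hf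
  have hfinj : Function.Injective f := by
    intro o o' h
    match o, o' with
    | none, none => rfl
    | none, some c =>
      exfalso
      simp only [hf] at h
      conv_lhs at h => rw [← b.mk_rep]
      rw [Projectivization.mk_eq_mk_iff] at h
      obtain ⟨t, ht⟩ := h
      rw [Units.smul_def] at ht
      have : (t : K) • u + ((t : K) * c - 1) • v = 0 := by
        simp only [smul_add, smul_smul] at ht
        linear_combination (norm := module) ht
      exact t.ne_zero (hind _ _ this).1
    | some c, none =>
      exfalso
      simp only [hf] at h
      conv_rhs at h => rw [← b.mk_rep]
      rw [Projectivization.mk_eq_mk_iff] at h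
      obtain ⟨t, ht⟩ := h
      rw [Units.smul_def] at ht
      have : (1 : K) • u + (c - (t : K)) • v = 0 := by
        linear_combination (norm := module) -ht
      simpa using (hind _ _ this).1
    | some c, some c' =>
      simp only [hf] at h
      rw [Projectivization.mk_eq_mk_iff] at h
      obtain ⟨t, ht⟩ := h
      rw [Units.smul_def] at ht
      have : ((t : K) - 1) • u + ((t : K) * c' - c) • v = 0 := by
        simp only [smul_add, smul_smul] at ht
        linear_combination (norm := module) ht
      obtain ⟨h1, h2⟩ := hind _ _ this
      have ht1 : (t : K) = 1 := by
        have := sub_eq_zero.mp h1; simpa using this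
      rw [ht1, one_mul] at h2
      exact congrArg some (sub_eq_zero.mp h2).symm
  have hrange : Set.range f ⊆ {P | P.submodule ≤ W} := by
    rintro _ ⟨o, rfl⟩
    match o with
    | none =>
      simp only [hf, Set.mem_setOf_eq]
      exact le_sup_right
    | some c =>
      simp only [hf, Set.mem_setOf_eq, Projectivization.submodule_mk]
      rw [Submodule.span_singleton_le_iff_mem, hWspan]
      exact Submodule.add_mem _ (Submodule.subset_span (by simp))
        (Submodule.smul_mem _ _ (Submodule.subset_span (by simp)))
  calc Fintype.card K + 1 = Nat.card (Option K) := by simp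
    _ = (Set.range f).ncard := by
        rw [← Set.ncard_univ, ← Set.image_univ, Set.ncard_image_of_injective _ hfinj]
    _ ≤ _ := Set.ncard_le_ncard hrange (Set.toFinite _)

lemma disjoint_count {α : Type*} [Finite α] {N m : ℕ} (C : Fin N → Set α) (T : Set α)
    (hsub : ∀ i, C i ⊆ T) (hcard : ∀ i, m ≤ (C i).ncard)
    (hdisj : ∀ i j : Fin N, i ≠ j → Disjoint (C i) (C j)) : N * m ≤ T.ncard := by
  classical
  cases nonempty_fintype α
  have hdisj' : ∀ i ∈ Finset.univ, ∀ j ∈ Finset.univ, i ≠ j →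
      Disjoint (C i).toFinset (C j).toFinset := fun i _ j _ hij =>
    Set.disjoint_toFinset.mpr (hdisj i j hij)
  calc N * m = ∑ _i : Fin N, m := by simp [mul_comm]
    _ ≤ ∑ i : Fin N, (C i).toFinset.card := Finset.sum_le_sum fun i _ => by
        rw [← Set.ncard_eq_toFinset_card']; exact hcard i
    _ = (Finset.univ.biUnion fun i => (C i).toFinset).card :=
        (Finset.card_biUnion hdisj').symm
    _ ≤ T.toFinset.card := Finset.card_le_card (by
        intro x hx
        simp only [Finset.mem_biUnion, Set.mem_toFinset] at hx ⊢
        obtain ⟨i, _, hxi⟩ := hx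
        exact hsub i hxi)
    _ = T.ncard := (Set.ncard_eq_toFinset_card' T).symm

theorem stmt_13 (K : Type*) [Field K] [Fintype K] (q : ℕ) (hq : Fintype.card K = q)
    (d : ℕ) (hd : 1 ≤ d) (N : ℕ)
    (σ : Fin N → (Projectivization K (Fin (d + 1) → K) ≃ Projectivization K (Fin (d + 1) → K)))
    (hortho : ∀ i j : Fin N, i ≠ j →
      ∀ l l' : Set (Projectivization K (Fin (d + 1) → K)),
        IsProjLine K (Fin (d + 1) → K) l → IsProjLine K (Fin (d + 1) → K) l' →
          ((σ i '' l) ∩ (σ j '' l')).ncard ≤ 2) :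
    N ≤ (q ^ (d + 1) - 2 * q + 1) / ((q - 1) ^ 2) := by
  classical
  set V := (Fin (d + 1) → K) with hV
  haveI : Finite (Projectivization K V) := Quotient.finite _
  have hq2 : 2 ≤ q := hq ▸ Fintype.one_lt_card
  have h01 : (0 : Fin (d + 1)) ≠ 1 := by
    apply Fin.ne_of_val_ne
    rw [Fin.val_zero, Fin.val_one', Nat.mod_eq_of_lt (by omega)]
    omega
  have h0 : (Pi.single (0 : Fin (d + 1)) (1 : K) : V) ≠ 0 := by
    intro h
    have := congrFun h 0
    simp at this
  have h1 : (Pi.single (1 : Fin (d + 1)) (1 : K) : V) ≠ 0 := by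
    intro h
    have := congrFun h 1
    simp at this
  set A := Projectivization.mk K _ h0 with hA
  set B := Projectivization.mk K _ h1 with hB
  have hAB : A ≠ B := by
    rw [hA, hB]
    intro hEq
    rw [Projectivization.mk_eq_mk_iff] at hEq
    obtain ⟨t, ht⟩ := hEq
    rw [Units.smul_def] at ht
    have := congrFun ht 0
    simp only [Pi.smul_apply, smul_eq_mul, Pi.single_apply, if_neg h01, if_pos rfl,
      mul_zero] at this
    exact zero_ne_one this
  choose l hline hAl hBl hlcard using fun i : Fin N =>
    exists_good_line K V ((σ i).symm A) ((σ i).symm B)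
      (fun h => hAB ((σ i).symm.injective h))
  set C : Fin N → Set (Projectivization K V) := fun i => (σ i '' l i) \ {A, B} with hC
  have hmemA : ∀ i, A ∈ σ i '' l i := fun i => ⟨(σ i).symm A, hAl i, (σ i).apply_symm_apply A⟩
  have hmemB : ∀ i, B ∈ σ i '' l i := fun i => ⟨(σ i).symm B, hBl i, (σ i).apply_symm_apply B⟩
  have hCcard : ∀ i, q - 1 ≤ (C i).ncard := by
    intro i
    have himg : (σ i '' l i).ncard = (l i).ncard :=
      Set.ncard_image_of_injective _ (σ i).injective
    have hsub : ({A, B} : Set (Projectivization K V)) ⊆ σ i '' l i := by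
      intro x hx
      rcases hx with rfl | hx
      · exact hmemA i
      · rw [Set.mem_singleton_iff] at hx; subst hx; exact hmemB i
    rw [hC]
    simp only
    rw [Set.ncard_diff hsub, Set.ncard_pair hAB, himg]
    have h5 := hlcard i
    rw [hq] at h5
    omega
  have hdisj : ∀ i j : Fin N, i ≠ j → Disjoint (C i) (C j) := by
    intro i j hij
    rw [Set.disjoint_left]
    rintro c ⟨hci, hcAB⟩ ⟨hcj, -⟩
    have hcA : c ≠ A := fun h => hcAB (h ▸ Set.mem_insert _ _)
    have hcB : c ≠ B := fun h => hcAB (h ▸ Set.mem_insert_of_mem _ rfl)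
    have hsub3 : ({A, B, c} : Set (Projectivization K V)) ⊆ (σ i '' l i) ∩ (σ j '' l j) := by
      intro x hx
      simp only [Set.mem_insert_iff, Set.mem_singleton_iff] at hx
      rcases hx with rfl | rfl | rfl
      · exact ⟨hmemA i, hmemA j⟩
      · exact ⟨hmemB i, hmemB j⟩
      · exact ⟨hci, hcj⟩
    have h3 : ({A, B, c} : Set (Projectivization K V)).ncard = 3 := by
      have hAn : A ∉ ({B, c} : Set (Projectivization K V)) := by
        simp only [Set.mem_insert_iff, Set.mem_singleton_iff]
        push_neg
        exact ⟨hAB, fun h => hcA h.symm⟩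
      rw [Set.ncard_insert_of_notMem hAn (Set.toFinite _), Set.ncard_pair (Ne.symm hcB)]
    have hb := hortho i j hij (l i) (l j) (hline i) (hline j)
    have hle := Set.ncard_le_ncard hsub3 (Set.toFinite _)
    omega
  have hmain : N * (q - 1) ≤ (Set.univ \ {A, B} : Set (Projectivization K V)).ncard :=
    disjoint_count C _ (fun i => Set.diff_subset_diff_left (Set.subset_univ _)) hCcard hdisj
  rw [Set.ncard_diff (Set.subset_univ _), Set.ncard_univ, Set.ncard_pair hAB] at hmain
  -- cardinality bound for the projectivization
  have hcardP : Nat.card (Projectivization K V) * (q - 1) ≤ q ^ (d + 1) - 1 := by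
    have hinj : Function.Injective (fun p : Projectivization K V × {c : K // c ≠ 0} =>
        (⟨(p.2 : K) • p.1.rep, smul_ne_zero p.2.2 p.1.rep_nonzero⟩ : {v : V // v ≠ 0})) := by
      rintro ⟨P1, c1⟩ ⟨P2, c2⟩ h
      simp only [Subtype.mk_eq_mk] at h
      have hmkeq : ∀ (P : Projectivization K V) (c : {c : K // c ≠ 0}),
          Projectivization.mk K ((c : K) • P.rep) (smul_ne_zero c.2 P.rep_nonzero) = P := by
        intro P c
        conv_rhs => rw [← P.mk_rep]
        rw [Projectivization.mk_eq_mk_iff]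
        exact ⟨Units.mk0 _ c.2, rfl⟩
      have hP : P1 = P2 :=
        calc P1 = Projectivization.mk K ((c1 : K) • P1.rep)
              (smul_ne_zero c1.2 P1.rep_nonzero) := (hmkeq P1 c1).symm
          _ = Projectivization.mk K ((c2 : K) • P2.rep)
              (smul_ne_zero c2.2 P2.rep_nonzero) := by
              rw [Projectivization.mk_eq_mk_iff]
              exact ⟨1, by simp [h]⟩
          _ = P2 := hmkeq P2 c2
      subst hP
      have hc : (c1 : K) = c2 := by
        have h2 : ((c1 : K) - c2) • P1.rep = 0 := by rw [sub_smul, h, sub_self]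
        rcases smul_eq_zero.mp h2 with h3 | h3
        · exact sub_eq_zero.mp h3
        · exact absurd h3 P1.rep_nonzero
      exact Prod.ext rfl (Subtype.ext hc)
    have hle := Nat.card_le_card_of_injective _ hinj
    rw [Nat.card_prod] at hle
    have hKc : Nat.card {c : K // c ≠ 0} = q - 1 := by
      rw [Nat.card_eq_fintype_card, Fintype.card_subtype_compl (fun c : K => c = 0),
        Fintype.card_subtype_eq, hq]
    have hVc : Nat.card {v : V // v ≠ 0} = q ^ (d + 1) - 1 := by
      rw [Nat.card_eq_fintype_card, Fintype.card_subtype_compl (fun v : V => v = 0),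
        Fintype.card_subtype_eq]
      have hfc : Fintype.card V = q ^ (d + 1) := by
        show Fintype.card (Fin (d + 1) → K) = q ^ (d + 1)
        rw [Fintype.card_fun, Fintype.card_fin, hq]
      rw [hfc]
    rw [hKc, hVc] at hle
    exact hle
  -- final arithmetic
  have h2q : 2 * q ≤ q ^ (d + 1) := by
    calc 2 * q ≤ q * q := Nat.mul_le_mul_right q hq2
      _ = q ^ 2 := (sq q).symm
      _ ≤ q ^ (d + 1) := Nat.pow_le_pow_right (by omega) (by omega)
  rw [Nat.le_div_iff_mul_le (Nat.pow_pos (n := 2) (by omega : 0 < q - 1))]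
  calc N * (q - 1) ^ 2 = (N * (q - 1)) * (q - 1) := by ring
    _ ≤ (Nat.card (Projectivization K V) - 2) * (q - 1) := Nat.mul_le_mul_right _ hmain
    _ ≤ q ^ (d + 1) - 2 * q + 1 := by
        rw [Nat.sub_mul]
        generalize hx : Nat.card (Projectivization K V) * (q - 1) = x at hcardP
        generalize hQ : q ^ (d + 1) = Q at hcardP h2q ⊢
        omega
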